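/- Let n ≥ 1 and let Λ be the symbol of the bipartition 1^{2n}.∅ with charge σ₀ = (0,−1). Suppose t ≥ 0 is an integer with t² + t ≤ 2n and μ is a bipartition of 2n − t² − t with symbol Λ' of charge σ_t. If Λ' ⊲ Λ, then ϖ_{Λ'} equals the composition of the symbol of the bipartition ∅.1^{2n} with charge σ₀, i.e. the non-increasing enumeration of the multiset consisting of every integer z ≤ 0 taken twice except z = −2n, which is taken once. -/

import Mathlib

open scoped Classical

noncomputable section

/-- A partition: an antitone, eventually zero sequence of natural numbers.
`parts k` is the `(k+1)`-st part `λ_{k+1}`. -/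
structure PartitionSeq where
  parts : ℕ → ℕ
  antitone' : Antitone parts
  exists_zero : ∃ N, parts N = 0

namespace PartitionSeq

lemma sorted_getD_antitone {l : List ℕ} (h : l.Pairwise (· ≥ ·)) :
    Antitone (fun k => l.getD k 0) := by
  intro i j hij
  simp only
  rcases lt_or_ge j l.length with hj | hj
  · have hi : i < l.length := lt_of_le_of_lt hij hj
    rw [List.getD_eq_getElem l 0 hj, List.getD_eq_getElem l 0 hi]
    rcases eq_or_lt_of_le hij with rfl | hlt
    · exact le_rfl
    · exact List.pairwise_iff_getElem.mp h i j hi hj hlt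
  · rw [List.getD_eq_default l 0 hj]
    exact Nat.zero_le _

/-- The partition whose multiset of (nonzero) parts is the multiset of nonzero
elements of `m`. -/
def ofMul (m : Multiset ℕ) : PartitionSeq where
  parts := fun k => ((m.sort (· ≤ ·)).reverse).getD k 0
  antitone' := by
    apply sorted_getD_antitone
    rw [List.pairwise_reverse]
    exact Multiset.pairwise_sort m (· ≤ ·)
  exists_zero := ⟨((m.sort (· ≤ ·)).reverse).length, List.getD_eq_default _ _ le_rfl⟩

/-- The size `|λ|` of a partition: the sum of its parts. -/
def size (p : PartitionSeq) : ℕ := ∑ i ∈ Finset.range (Nat.find p.exists_zero), p.parts i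

lemma finite_gt (p : PartitionSeq) (k : ℕ) : {i : ℕ | k < p.parts i}.Finite := by
  obtain ⟨N, hN⟩ := p.exists_zero
  apply (Set.finite_Iio N).subset
  intro i hi
  simp only [Set.mem_setOf_eq] at hi
  by_contra hc
  simp only [Set.mem_Iio, not_lt] at hc
  have := p.antitone' hc
  omega

/-- The conjugate (transpose) partition. -/
def conj (p : PartitionSeq) : PartitionSeq where
  parts := fun k => {i : ℕ | k < p.parts i}.ncard
  antitone' := fun a b hab =>
    Set.ncard_le_ncard (fun i hi => lt_of_le_of_lt hab hi) (p.finite_gt a)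
  exists_zero := by
    refine ⟨p.parts 0, ?_⟩
    have h : {i : ℕ | p.parts 0 < p.parts i} = ∅ := by
      ext i
      simp only [Set.mem_setOf_eq, Set.mem_empty_iff_false, iff_false, not_lt]
      exact p.antitone' (Nat.zero_le i)
    show {i : ℕ | p.parts 0 < p.parts i}.ncard = 0
    rw [h, Set.ncard_empty]

/-- The 180°-rotation of the complement of `p` inside the rectangle with
`rows` rows of length `c`: the partition `(c - p_rows, c - p_{rows-1}, …, c - p₁)`. -/
def rotCompl (c rows : ℕ) (p : PartitionSeq) : PartitionSeq where
  parts := fun k => if k < rows then c - p.parts (rows - 1 - k) else 0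
  antitone' := by
    intro a b hab
    by_cases hb : b < rows
    · have ha : a < rows := lt_of_le_of_lt hab hb
      simp only [if_pos hb, if_pos ha]
      exact Nat.sub_le_sub_left (p.antitone' (by omega)) c
    · simp only [if_neg hb]
      exact Nat.zero_le _
  exists_zero := ⟨rows, by simp⟩

end PartitionSeq

/-- A bipartition: a pair of partitions. -/
abbrev Bipartition := PartitionSeq × PartitionSeq

/-- The size of a bipartition. -/
def Bipartition.size (l : Bipartition) : ℕ := l.1.size + l.2.size

/-- The bipartition whose components have parts the multisets `a` and `b`. -/
def bip (a b : Multiset ℕ) : Bipartition := (PartitionSeq.ofMul a, PartitionSeq.ofMul b)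

/-- The multiset of parts of the partition `a 1^b` (one part `a`, then `b` parts `1`). -/
def hook (a b : ℕ) : Multiset ℕ := a ::ₘ Multiset.replicate b 1

/-- The charged β-set of a partition, as a sequence:
`betaSet p s i = λ_{i+1} + s - (i+1) + 1`. -/
def betaSet (p : PartitionSeq) (s : ℤ) (i : ℕ) : ℤ := (p.parts i : ℤ) + s - i

/-- The charged symbol of a bipartition with charge `σ`, as a pair of subsets of `ℤ`. -/
def symbolOf (l : Bipartition) (σ : ℤ × ℤ) : Set ℤ × Set ℤ :=
  (Set.range (betaSet l.1 σ.1), Set.range (betaSet l.2 σ.2))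

/-- The charge `σ_t`. -/
def sigmaT (t : ℕ) : ℤ × ℤ :=
  if Even t then ((t : ℤ), -1 - (t : ℤ)) else (-1 - (t : ℤ), (t : ℤ))

/-- The trivial symbol `({0,-1,-2,…},{-1,-2,-3,…})`, the symbol of the empty
bipartition with charge `σ₀ = (0,-1)`. -/
def trivialSymbol : Set ℤ × Set ℤ := ({z : ℤ | z ≤ 0}, {z : ℤ | z ≤ -1})

/-- Removing one `n`-co-hook from the symbol `Λ`, yielding `Λ'`: remove `x+n` from one
row, adjoin `x` to the other row, and exchange the two rows. -/
def CohookStep (n : ℕ) (Λ Λ' : Set ℤ × Set ℤ) : Prop :=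
  (∃ x : ℤ, x + n ∈ Λ.1 ∧ x ∉ Λ.2 ∧ Λ' = (Λ.2 ∪ {x}, Λ.1 \ {x + n})) ∨
  (∃ x : ℤ, x + n ∈ Λ.2 ∧ x ∉ Λ.1 ∧ Λ' = (Λ.2 \ {x + n}, Λ.1 ∪ {x}))

/-- `C` is the `n`-co-core of `Λ`: it is obtained from `Λ` by recursively removing
`n`-co-hooks, and no further `n`-co-hook can be removed. -/
def IsCocore (n : ℕ) (Λ C : Set ℤ × Set ℤ) : Prop :=
  Relation.ReflTransGen (CohookStep n) Λ C ∧ ∀ C', ¬ CohookStep n C C'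

/-- Number of entries of the charged β-set of `p` that are `≥ α` (with multiplicity). -/
def betaCountGE (p : PartitionSeq) (s α : ℤ) : ℕ := Nat.card {i : ℕ // α ≤ betaSet p s i}

/-- Number of entries `≥ α`, with multiplicity, of the multiset union of the two rows
of the symbol of `l` with charge `σ`. -/
def symCountGE (l : Bipartition) (σ : ℤ × ℤ) (α : ℤ) : ℕ :=
  betaCountGE l.1 σ.1 α + betaCountGE l.2 σ.2 α

/-- The composition `ϖ_Λ` of the symbol of `l` with charge `σ`: `comp l σ k` is the
`(k+1)`-st largest entry (with multiplicity) of the multiset union of the two rows. -/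
def comp (l : Bipartition) (σ : ℤ × ℤ) (k : ℕ) : ℤ :=
  sSup {z : ℤ | k + 1 ≤ symCountGE l σ z}

/-- All partial sums of the composition of the symbol `(l,σ)` are bounded by those of
`(m,τ)`. -/
def DomLE (l : Bipartition) (σ : ℤ × ℤ) (m : Bipartition) (τ : ℤ × ℤ) : Prop :=
  ∀ j : ℕ, ∑ k ∈ Finset.range j, comp l σ k ≤ ∑ k ∈ Finset.range j, comp m τ k

/-- Strict dominance `Λ ⊲ Λ'` of symbols: the compositions differ and all partial sums
of the first are bounded by those of the second. -/
def DomLT (l : Bipartition) (σ : ℤ × ℤ) (m : Bipartition) (τ : ℤ × ℤ) : Prop :=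
  comp l σ ≠ comp m τ ∧ DomLE l σ m τ

/-- A box `(x, y, j)` (0-indexed row `x`, 0-indexed column `y`, component `j`:
`j = 0` is the first component, `j = 1` the second). -/
abbrev Box := ℕ × ℕ × Fin 2

/-- The component of a bipartition selected by `j : Fin 2`. -/
def Bipartition.partsOf (l : Bipartition) (j : Fin 2) : PartitionSeq := if j = 0 then l.1 else l.2

/-- Membership of a box in the Young diagram of a bipartition. -/
def MemY (l : Bipartition) (b : Box) : Prop := b.2.1 < (l.partsOf b.2.2).parts b.1

/-- The entry of the charge `σ` corresponding to component `j`. -/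
def chargeOf (σ : ℤ × ℤ) (j : Fin 2) : ℤ := if j = 0 then σ.1 else σ.2

/-- The charged content `co^σ(b) = y - x + σ_j` of a box. -/
def content (σ : ℤ × ℤ) (b : Box) : ℤ := (b.2.1 : ℤ) - (b.1 : ℤ) + chargeOf σ b.2.2

/-- `j(b) ∈ {1,2}`: the component of a box, numbered 1 or 2. -/
def jval (b : Box) : ℕ := (b.2.2 : ℕ) + 1

/-- The counting function of the Dunkl–Griffeth order. -/
def dgCount (l : Bipartition) (s : ℤ × ℤ) (d : ℕ) (α : ℝ) (j : ℕ) : ℕ :=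
  Nat.card {b : Box // MemY l b ∧
    (α < (content s b : ℝ) - (jval b : ℝ) * (d : ℝ) / 2 ∨
      ((content s b : ℝ) - (jval b : ℝ) * (d : ℝ) / 2 = α ∧ jval b ≤ j))}

/-- The Dunkl–Griffeth order `λ ⪯_s μ` (with respect to `d`). -/
def DGLE (l m : Bipartition) (s : ℤ × ℤ) (d : ℕ) : Prop :=
  ∀ (α : ℝ), ∀ j ∈ ({1, 2} : Set ℕ), dgCount l s d α j ≤ dgCount m s d α j

/-- A box of the extended Young diagram: rows are infinite to the left, so the column
coordinate is an integer.  `(x, y, j)` is the box in (0-indexed) row `x`, with integer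
column coordinate `y` (`y = 0` is the first column), in component `j`. -/
abbrev ExtBox := ℕ × ℤ × Fin 2

/-- Membership in the extended Young diagram of a bipartition. -/
def MemExtY (l : Bipartition) (b : ExtBox) : Prop :=
  b.2.1 < ((l.partsOf b.2.2).parts b.1 : ℤ)

/-- The charged content of an extended box. -/
def contentExt (σ : ℤ × ℤ) (b : ExtBox) : ℤ := b.2.1 - (b.1 : ℤ) + chargeOf σ b.2.2

/-- `b` is a removable box of the bipartition `l`. -/
def Removable (l : Bipartition) (b : Box) : Prop :=
  (l.partsOf b.2.2).parts b.1 = b.2.1 + 1 ∧ (l.partsOf b.2.2).parts (b.1 + 1) ≤ b.2.1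

/-- `b` is an addable box of the bipartition `l`. -/
def Addable (l : Bipartition) (b : Box) : Prop :=
  (l.partsOf b.2.2).parts b.1 = b.2.1 ∧
    (b.1 = 0 ∨ b.2.1 + 1 ≤ (l.partsOf b.2.2).parts (b.1 - 1))

/-- The order in which boxes are listed in the `i`-word: increasing charged content,
a component-2 box preceding a component-1 box of equal charged content. -/
def BoxLT (σ : ℤ × ℤ) (b b' : Box) : Prop :=
  content σ b < content σ b' ∨
    (content σ b = content σ b' ∧ b.2.2 = 1 ∧ b'.2.2 = 0)

/-- `L` is the list of boxes underlying the `i`-word of `(l, σ)` with respect to `d`: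
it lists, in increasing order, exactly the addable and removable boxes of `l` whose
charged content is congruent to `i` modulo `d`. -/
def IsIWord (l : Bipartition) (σ : ℤ × ℤ) (d : ℕ) (i : ZMod d) (L : List Box) : Prop :=
  L.Pairwise (BoxLT σ) ∧
    ∀ b : Box, b ∈ L ↔ ((Addable l b ∨ Removable l b) ∧ ((content σ b : ZMod d) = i))

/-- The sign of a box in the `i`-word: `true` (`+`) for addable, `false` (`−`) for
removable boxes. -/
def signOf (l : Bipartition) (b : Box) : Bool := if Addable l b then true else false

/-- One reduction step on words: delete an adjacent pair `−+`. -/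
def RedStep (w w' : List Bool) : Prop :=
  ∃ u v : List Bool, w = u ++ false :: true :: v ∧ w' = u ++ v

/-- `ẽ_i l = 0`: the reduced `i`-word of `(l, σ)` contains no `−`, i.e. the `i`-word
reduces to a word consisting only of `+`'s. -/
def AnnihilatedE (l : Bipartition) (σ : ℤ × ℤ) (d : ℕ) (i : ZMod d) : Prop :=
  ∃ L : List Box, IsIWord l σ d i L ∧
    ∃ a : ℕ, Relation.ReflTransGen RedStep (L.map (signOf l)) (List.replicate a true)

/-- `q` is obtained from the partition `p` by adding one box. -/
def PCovers (p q : PartitionSeq) : Prop :=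
  ∃ x : ℕ, q.parts x = p.parts x + 1 ∧ ∀ y : ℕ, y ≠ x → q.parts y = p.parts y

/-- `m` is obtained from the bipartition `l` by adding one box to its Young diagram. -/
def BipCovers (l m : Bipartition) : Prop :=
  (PCovers l.1 m.1 ∧ m.2 = l.2) ∨ (m.1 = l.1 ∧ PCovers l.2 m.2)

/-- `A(l) = Σ_μ μ`, the sum over all bipartitions obtained from `l` by adding one box,
as an element of the group of `ℤ`-valued functions on bipartitions. -/
def addB (l : Bipartition) : Bipartition → ℤ := fun m => if BipCovers l m then 1 else 0

/-- The projection `π_S` onto the span of the bipartitions lying in `S`. -/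
def projS (S : Set Bipartition) (f : Bipartition → ℤ) : Bipartition → ℤ :=
  fun m => if m ∈ S then f m else 0

/-- The basis element of `ℤ[BP]` corresponding to a bipartition. -/
def deltaB (l : Bipartition) : Bipartition → ℤ := fun m => if m = l then 1 else 0

/-- The bipartitions of `2n` labelling the principal-series unipotent characters in
the principal `Φ_{2n}`-block. -/
def PS (n : ℕ) : Set Bipartition :=
  {l | (∃ i j : ℕ, 0 < i ∧ i < n ∧ j ≤ n ∧
          l = bip (hook (n - i) j) (hook (n - j + 1) (i - 1))) ∨
       (∃ j : ℕ, j < 2 * n ∧ l = bip (hook (2 * n - j) j) 0) ∨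
       (∃ i : ℕ, 0 < i ∧ i ≤ 2 * n ∧ l = bip 0 (hook (2 * n - i + 1) (i - 1)))}

/-- The bipartitions of `2n-2` labelling the `B₂`-series unipotent characters in the
principal `Φ_{2n}`-block: `2^i 1^{j-i-1} . (n-i-1)(n-j)` for `0 ≤ i < j ≤ n`. -/
def LB2 (n : ℕ) : Set Bipartition :=
  {l | ∃ i j : ℕ, i < j ∧ j ≤ n ∧
        l = bip (Multiset.replicate i 2 + Multiset.replicate (j - i - 1) 1)
                {n - i - 1, n - j}}

/-- The bipartitions of `2n-6` labelling the `B₆`-series unipotent characters in the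
principal `Φ_{2n}`-block: `(n-i-2)(n-j-1) . 2^{i-1} 1^{j-i-1}` for `0 < i < j < n`. -/
def LB6 (n : ℕ) : Set Bipartition :=
  {l | ∃ i j : ℕ, 0 < i ∧ i < j ∧ j < n ∧
        l = bip {n - i - 2, n - j - 1}
                (Multiset.replicate (i - 1) 2 + Multiset.replicate (j - i - 1) 1)}

end

section AuxBeta

variable (p : PartitionSeq) (s : ℤ)

lemma betaSet_add (i j : ℕ) (h : i ≤ j) :
    betaSet p s j + (j : ℤ) ≤ betaSet p s i + (i : ℤ) := by
  unfold betaSet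
  have := p.antitone' h
  omega

lemma exists_betaSet_lt (α : ℤ) : ∃ i : ℕ, betaSet p s i < α := by
  refine ⟨(betaSet p s 0 - α + 1).toNat, ?_⟩
  have h := betaSet_add p s 0 (betaSet p s 0 - α + 1).toNat (Nat.zero_le _)
  omega

lemma lt_betaCountGE_iff (α : ℤ) (i : ℕ) :
    i < betaCountGE p s α ↔ α ≤ betaSet p s i := by
  classical
  have hne : {j : ℕ | betaSet p s j < α}.Nonempty := exists_betaSet_lt p s α
  set k := sInf {j : ℕ | betaSet p s j < α} with hk
  have hkmem : betaSet p s k < α := Nat.sInf_mem hne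
  have hiff : ∀ j : ℕ, α ≤ betaSet p s j ↔ j ∈ Set.Iio k := by
    intro j
    simp only [Set.mem_Iio]
    constructor
    · intro hj
      by_contra hc
      push_neg at hc
      have := betaSet_add p s k j hc
      omega
    · intro hj
      by_contra hc
      push_neg at hc
      have hmem : j ∈ {j : ℕ | betaSet p s j < α} := hc
      have := Nat.sInf_le hmem
      omega
  have hcount : betaCountGE p s α = k := by
    unfold betaCountGE
    rw [Nat.card_congr (Equiv.subtypeEquivRight hiff)]
    have he : { x // x ∈ Set.Iio k } ≃ Fin k :=
      (Equiv.subtypeEquivRight (fun x => by simp)).trans Fin.equivSubtype.symm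
    rw [Nat.card_congr he, Nat.card_eq_fintype_card, Fintype.card_fin]
  rw [hcount]
  exact ((hiff i).trans (by simp)).symm

lemma betaCountGE_eq_of (α : ℤ) (c : ℕ)
    (h : ∀ i : ℕ, i < c ↔ α ≤ betaSet p s i) : betaCountGE p s α = c := by
  have h2 : ∀ i : ℕ, i < betaCountGE p s α ↔ i < c := by
    intro i
    rw [lt_betaCountGE_iff, h]
  have a := h2 c
  have b := h2 (betaCountGE p s α)
  omega

lemma betaCountGE_mono (α β : ℤ) (h : α ≤ β) :
    betaCountGE p s β ≤ betaCountGE p s α := by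
  by_contra hc
  push_neg at hc
  have h1 := (lt_betaCountGE_iff p s β (betaCountGE p s α)).mp hc
  have h2 : ¬ α ≤ betaSet p s (betaCountGE p s α) := by
    intro h2
    exact absurd ((lt_betaCountGE_iff p s α _).mpr h2) (lt_irrefl _)
  omega

lemma betaCountGE_step (α : ℤ) :
    betaCountGE p s (α - 1) ≤ betaCountGE p s α + 1 := by
  by_contra hc
  push_neg at hc
  set b := betaCountGE p s α with hb
  have h1 := (lt_betaCountGE_iff p s (α - 1) (b + 1)).mp (by omega)
  have h2 : ¬ α ≤ betaSet p s b := by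
    intro h2
    exact absurd ((lt_betaCountGE_iff p s α _).mpr h2) (lt_irrefl _)
  have h3 := betaSet_add p s b (b + 1) (by omega)
  push_cast at h3
  omega

lemma betaCountGE_tail (α : ℤ) (N₀ : ℕ) (hN : p.parts N₀ = 0)
    (hα : α ≤ s + 1 - N₀) : betaCountGE p s α = (s + 1 - α).toNat := by
  apply betaCountGE_eq_of
  intro i
  constructor
  · intro hi
    rcases lt_or_ge i N₀ with h | h
    · have : (0 : ℤ) ≤ p.parts i := by positivity
      unfold betaSet
      omega
    · have hz : p.parts i = 0 := Nat.le_antisymm (hN ▸ p.antitone' h) (Nat.zero_le _)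
      unfold betaSet
      rw [hz]
      omega
  · intro hi
    by_contra hc
    push_neg at hc
    have hiN : N₀ ≤ i := by omega
    have hz : p.parts i = 0 := Nat.le_antisymm (hN ▸ p.antitone' hiN) (Nat.zero_le _)
    unfold betaSet at hi
    rw [hz] at hi
    omega

lemma betaCountGE_vanish (α : ℤ) (h : (p.parts 0 : ℤ) + s < α) :
    betaCountGE p s α = 0 := by
  apply betaCountGE_eq_of
  intro i
  have h0 := betaSet_add p s 0 i (Nat.zero_le i)
  unfold betaSet at h0 ⊢
  constructor
  · intro hi
    exact absurd hi (by omega)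
  · intro hi
    exfalso
    simp only [Nat.cast_zero] at h0
    omega

end AuxBeta
section AuxSym

variable (l : Bipartition) (σ : ℤ × ℤ)

lemma symCountGE_mono (α β : ℤ) (h : α ≤ β) : symCountGE l σ β ≤ symCountGE l σ α :=
  Nat.add_le_add (betaCountGE_mono _ _ _ _ h) (betaCountGE_mono _ _ _ _ h)

lemma symCountGE_step (α : ℤ) : symCountGE l σ (α - 1) ≤ symCountGE l σ α + 2 := by
  have h1 := betaCountGE_step l.1 σ.1 α
  have h2 := betaCountGE_step l.2 σ.2 α
  unfold symCountGE
  omega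

/-- A bound above which the symbol has no entries. -/
def vbound : ℤ := max ((l.1.parts 0 : ℤ) + σ.1) ((l.2.parts 0 : ℤ) + σ.2)

lemma symCountGE_vanish (α : ℤ) (h : vbound l σ < α) : symCountGE l σ α = 0 := by
  unfold vbound at h
  have h1 := betaCountGE_vanish l.1 σ.1 α (by omega)
  have h2 := betaCountGE_vanish l.2 σ.2 α (by omega)
  unfold symCountGE
  omega

lemma symCountGE_large (k : ℕ) : ∃ α : ℤ, k + 1 ≤ symCountGE l σ α := by
  set N₀ := Nat.find l.1.exists_zero with hN₀
  refine ⟨σ.1 - N₀ - k, ?_⟩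
  have h := betaCountGE_tail l.1 σ.1 (σ.1 - N₀ - k) N₀ (Nat.find_spec l.1.exists_zero) (by omega)
  unfold symCountGE
  have : (σ.1 + 1 - (σ.1 - N₀ - k)).toNat = N₀ + k + 1 := by omega
  omega

lemma comp_galois (k : ℕ) (z : ℤ) :
    z ≤ comp l σ k ↔ k + 1 ≤ symCountGE l σ z := by
  have hne : {z : ℤ | k + 1 ≤ symCountGE l σ z}.Nonempty := symCountGE_large l σ k
  have hbdd : BddAbove {z : ℤ | k + 1 ≤ symCountGE l σ z} := by
    refine ⟨vbound l σ, fun w hw => ?_⟩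
    simp only [Set.mem_setOf_eq] at hw
    by_contra hc
    push_neg at hc
    rw [symCountGE_vanish l σ w hc] at hw
    omega
  have hmem := Int.csSup_mem hne hbdd
  simp only [Set.mem_setOf_eq] at hmem
  unfold comp
  constructor
  · intro hz
    calc k + 1 ≤ symCountGE l σ (sSup {z : ℤ | k + 1 ≤ symCountGE l σ z}) := hmem
    _ ≤ symCountGE l σ z := symCountGE_mono l σ _ _ hz
  · intro hz
    exact le_csSup hbdd hz

lemma comp_congr (m : Bipartition) (τ : ℤ × ℤ)
    (h : ∀ α, symCountGE l σ α = symCountGE m τ α) : comp l σ = comp m τ := by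
  funext k
  unfold comp
  congr 1
  ext z
  simp only [Set.mem_setOf_eq, h]

end AuxSym
/-- Sum of the counting function over `Icc α B`. -/
noncomputable def TN (N : ℤ → ℕ) (α B : ℤ) : ℤ := ∑ β ∈ Finset.Icc α B, (N β : ℤ)

lemma sum_indicator_le (c α B : ℤ) (h1 : α ≤ c) (h2 : c ≤ B) :
    (∑ β ∈ Finset.Icc α B, if β ≤ c then (1 : ℤ) else 0) = c - α + 1 := by
  rw [Finset.sum_boole]
  have hf : (Finset.Icc α B).filter (fun β => β ≤ c) = Finset.Icc α c := by
    ext x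
    simp only [Finset.mem_filter, Finset.mem_Icc]
    omega
  rw [hf, Int.card_Icc]
  omega

section TId

variable (l : Bipartition) (σ : ℤ × ℤ)

lemma T_eq_comp_sum (α B : ℤ) (hB : vbound l σ ≤ B) :
    TN (symCountGE l σ) α B
      = ∑ k ∈ Finset.range (symCountGE l σ α), (comp l σ k - α + 1) := by
  unfold TN
  have hstep1 : ∀ β ∈ Finset.Icc α B,
      (symCountGE l σ β : ℤ)
        = ∑ k ∈ Finset.range (symCountGE l σ α), (if β ≤ comp l σ k then (1 : ℤ) else 0) := by
    intro β hβ
    have hαβ : α ≤ β := (Finset.mem_Icc.mp hβ).1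
    have hfil : (Finset.range (symCountGE l σ α)).filter (fun k => β ≤ comp l σ k)
        = Finset.range (symCountGE l σ β) := by
      ext k
      simp only [Finset.mem_filter, Finset.mem_range]
      constructor
      · rintro ⟨hk, hc⟩
        have := (comp_galois l σ k β).mp hc
        omega
      · intro hk
        have h1 : k < symCountGE l σ α := lt_of_lt_of_le hk (symCountGE_mono l σ α β hαβ)
        exact ⟨h1, (comp_galois l σ k β).mpr (by omega)⟩
    rw [Finset.sum_boole, hfil]
    simp
  rw [Finset.sum_congr rfl hstep1, Finset.sum_comm]
  apply Finset.sum_congr rfl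
  intro k hk
  have hk' : k < symCountGE l σ α := Finset.mem_range.mp hk
  have h1 : α ≤ comp l σ k := (comp_galois l σ k α).mpr (by omega)
  have h2 : comp l σ k ≤ B := by
    by_contra hc
    push_neg at hc
    have hv := symCountGE_vanish l σ (comp l σ k) (by omega)
    have := (comp_galois l σ k (comp l σ k)).mp le_rfl
    omega
  rw [sum_indicator_le (comp l σ k) α B h1 h2]

lemma sum_comp_sub (α : ℤ) (j : ℕ) :
    ∑ k ∈ Finset.range j, (comp l σ k - α + 1)
      = (∑ k ∈ Finset.range j, comp l σ k) - j * (α - 1) := by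
  have h : ∀ k : ℕ, comp l σ k - α + 1 = comp l σ k + (1 - α) := fun k => by ring
  simp_rw [h]
  rw [Finset.sum_add_distrib]
  simp only [Finset.sum_const, Finset.card_range, nsmul_eq_mul]
  ring

lemma partial_le_T (α B : ℤ) (hB : vbound l σ ≤ B) (j : ℕ) :
    (∑ k ∈ Finset.range j, comp l σ k) - j * (α - 1) ≤ TN (symCountGE l σ) α B := by
  rw [T_eq_comp_sum l σ α B hB, ← sum_comp_sub]
  set J := symCountGE l σ α with hJ
  rcases le_total j J with h | h
  · apply Finset.sum_le_sum_of_subset_of_nonneg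
    · exact Finset.range_subset_range.mpr h
    · intro k hk _
      have hk' : k < J := Finset.mem_range.mp hk
      have h1 : α ≤ comp l σ k := (comp_galois l σ k α).mpr (by omega)
      omega
  · have hsplit : ∑ k ∈ Finset.range j, (comp l σ k - α + 1)
        = (∑ k ∈ Finset.range J, (comp l σ k - α + 1))
          + ∑ k ∈ Finset.Ico J j, (comp l σ k - α + 1) := by
      simp only [Finset.range_eq_Ico]
      exact (Finset.sum_Ico_consecutive _ (Nat.zero_le J) h).symm
    rw [hsplit]
    have hneg : ∑ k ∈ Finset.Ico J j, (comp l σ k - α + 1) ≤ 0 := by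
      apply Finset.sum_nonpos
      intro k hk
      have hk' : J ≤ k := (Finset.mem_Ico.mp hk).1
      have h1 : ¬ α ≤ comp l σ k := by
        intro hc
        have := (comp_galois l σ k α).mp hc
        omega
      omega
    omega

lemma T_le_T (m : Bipartition) (τ : ℤ × ℤ) (α B : ℤ)
    (hBl : vbound l σ ≤ B) (hBm : vbound m τ ≤ B)
    (hdom : DomLE l σ m τ) :
    TN (symCountGE l σ) α B ≤ TN (symCountGE m τ) α B := by
  rw [T_eq_comp_sum l σ α B hBl, sum_comp_sub]
  calc (∑ k ∈ Finset.range (symCountGE l σ α), comp l σ k)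
        - (symCountGE l σ α) * (α - 1)
      ≤ (∑ k ∈ Finset.range (symCountGE l σ α), comp m τ k)
        - (symCountGE l σ α) * (α - 1) := by
        have := hdom (symCountGE l σ α)
        omega
    _ ≤ TN (symCountGE m τ) α B := partial_le_T m τ α B hBm _

end TId
lemma parts_eq_zero_of_find_le (p : PartitionSeq) (i : ℕ)
    (h : Nat.find p.exists_zero ≤ i) : p.parts i = 0 :=
  Nat.le_antisymm (Nat.find_spec p.exists_zero ▸ p.antitone' h) (Nat.zero_le _)

lemma size_eq_sum (p : PartitionSeq) (c : ℕ) (hc : Nat.find p.exists_zero ≤ c) :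
    (∑ i ∈ Finset.range c, p.parts i) = p.size := by
  unfold PartitionSeq.size
  set F := Nat.find p.exists_zero with hF
  have hsplit : ∑ i ∈ Finset.Ico 0 F, p.parts i + ∑ i ∈ Finset.Ico F c, p.parts i
      = ∑ i ∈ Finset.Ico 0 c, p.parts i :=
    Finset.sum_Ico_consecutive _ (Nat.zero_le F) hc
  have hzero : ∑ i ∈ Finset.Ico F c, p.parts i = 0 := by
    apply Finset.sum_eq_zero
    intro i hi
    exact parts_eq_zero_of_find_le p i (Finset.mem_Ico.mp hi).1
  simp only [Finset.range_eq_Ico]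
  omega

lemma sum_id_int (c : ℕ) : 2 * (∑ i ∈ Finset.range c, (i : ℤ)) = c * (c - 1) := by
  induction c with
  | zero => simp
  | succ c ih =>
    rw [Finset.sum_range_succ]
    push_cast
    push_cast at ih
    ring_nf
    ring_nf at ih
    omega

lemma two_sum_c_sub (c : ℕ) : 2 * (∑ i ∈ Finset.range c, ((c : ℤ) - i)) = c * (c + 1) := by
  have h1 : ∑ i ∈ Finset.range c, ((c : ℤ) - i)
      = (∑ i ∈ Finset.range c, (c : ℤ)) - ∑ i ∈ Finset.range c, (i : ℤ) :=
    Finset.sum_sub_distrib _ _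
  have h2 := sum_id_int c
  simp only [Finset.sum_const, Finset.card_range, nsmul_eq_mul] at h1
  rw [h1]
  ring_nf
  ring_nf at h2
  omega

lemma TN_eq_sum (N : ℤ → ℕ) (f : ℕ → ℤ) (α B : ℤ)
    (hgal : ∀ (i : ℕ) (β : ℤ), i < N β ↔ β ≤ f i)
    (hfB : ∀ i, f i ≤ B) :
    TN N α B = ∑ i ∈ Finset.range (N α), (f i - α + 1) := by
  unfold TN
  have hmono : ∀ β γ : ℤ, β ≤ γ → N γ ≤ N β := by
    intro β γ h
    by_contra hc
    push_neg at hc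
    have ha := (hgal (N β) γ).mp hc
    have hb : ¬ β ≤ f (N β) := fun hc2 => absurd ((hgal _ _).mpr hc2) (lt_irrefl _)
    omega
  have hstep1 : ∀ β ∈ Finset.Icc α B,
      (N β : ℤ) = ∑ i ∈ Finset.range (N α), (if β ≤ f i then (1 : ℤ) else 0) := by
    intro β hβ
    have hαβ : α ≤ β := (Finset.mem_Icc.mp hβ).1
    have hfil : (Finset.range (N α)).filter (fun i => β ≤ f i) = Finset.range (N β) := by
      ext i
      simp only [Finset.mem_filter, Finset.mem_range]
      constructor
      · rintro ⟨hk, hc⟩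
        exact (hgal i β).mpr hc
      · intro hk
        exact ⟨lt_of_lt_of_le hk (hmono α β hαβ), (hgal i β).mp hk⟩
    rw [Finset.sum_boole, hfil]
    simp
  rw [Finset.sum_congr rfl hstep1, Finset.sum_comm]
  apply Finset.sum_congr rfl
  intro i hi
  have hi' : i < N α := Finset.mem_range.mp hi
  exact sum_indicator_le (f i) α B ((hgal i α).mp hi') (hfB i)

lemma T_row (p : PartitionSeq) (s α B : ℤ) (hB : (p.parts 0 : ℤ) + s ≤ B)
    (N₀ : ℕ) (h0 : p.parts N₀ = 0) (hα : α ≤ s + 1 - N₀) :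
    2 * TN (betaCountGE p s) α B
      = 2 * (p.size : ℤ) + (s + 1 - α) * (s + 2 - α) := by
  have hgal : ∀ (i : ℕ) (β : ℤ), i < betaCountGE p s β ↔ β ≤ betaSet p s i :=
    fun i β => lt_betaCountGE_iff p s β i
  have hfB : ∀ i, betaSet p s i ≤ B := by
    intro i
    have h := betaSet_add p s 0 i (Nat.zero_le i)
    have h0' : betaSet p s 0 = (p.parts 0 : ℤ) + s := by unfold betaSet; push_cast; ring
    omega
  rw [TN_eq_sum _ _ α B hgal hfB]
  have hc : betaCountGE p s α = (s + 1 - α).toNat :=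
    betaCountGE_tail p s α N₀ h0 hα
  rw [hc]
  set c := (s + 1 - α).toNat with hcdef
  have hN₀ : (0 : ℤ) ≤ (N₀ : ℤ) := by positivity
  have hcz : (c : ℤ) = s + 1 - α := by omega
  have hsplit : ∀ i ∈ Finset.range c,
      betaSet p s i - α + 1 = (p.parts i : ℤ) + ((c : ℤ) - i) := by
    intro i hi
    unfold betaSet
    omega
  rw [Finset.sum_congr rfl hsplit, Finset.sum_add_distrib]
  have hparts : ∑ i ∈ Finset.range c, (p.parts i : ℤ) = (p.size : ℤ) := by
    rw [← Nat.cast_sum]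
    congr 1
    apply size_eq_sum
    have hfind : Nat.find p.exists_zero ≤ N₀ := Nat.find_min' _ h0
    omega
  have hgauss := two_sum_c_sub c
  rw [hparts]
  have hc1 : (c : ℤ) + 1 = s + 2 - α := by omega
  calc 2 * ((p.size : ℤ) + ∑ i ∈ Finset.range c, ((c:ℤ) - i))
      = 2 * (p.size : ℤ) + 2 * ∑ i ∈ Finset.range c, ((c:ℤ) - i) := by ring
    _ = 2 * (p.size : ℤ) + (c : ℤ) * ((c:ℤ) + 1) := by rw [hgauss]
    _ = 2 * (p.size : ℤ) + (s + 1 - α) * (s + 2 - α) := by rw [hcz]; ring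

lemma T_size (l : Bipartition) (σ : ℤ × ℤ) (α B : ℤ)
    (hB1 : (l.1.parts 0 : ℤ) + σ.1 ≤ B) (hB2 : (l.2.parts 0 : ℤ) + σ.2 ≤ B)
    (N₁ N₂ : ℕ) (h1 : l.1.parts N₁ = 0) (h2 : l.2.parts N₂ = 0)
    (hα1 : α ≤ σ.1 + 1 - N₁) (hα2 : α ≤ σ.2 + 1 - N₂) :
    2 * TN (symCountGE l σ) α B
      = 2 * (Bipartition.size l : ℤ) + (σ.1 + 1 - α) * (σ.1 + 2 - α)
        + (σ.2 + 1 - α) * (σ.2 + 2 - α) := by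
  have hadd : TN (symCountGE l σ) α B
      = TN (betaCountGE l.1 σ.1) α B + TN (betaCountGE l.2 σ.2) α B := by
    unfold TN symCountGE
    rw [← Finset.sum_add_distrib]
    apply Finset.sum_congr rfl
    intro β _
    push_cast
    ring
  rw [hadd, mul_add, T_row l.1 σ.1 α B hB1 N₁ h1 hα1, T_row l.2 σ.2 α B hB2 N₂ h2 hα2]
  unfold Bipartition.size
  push_cast
  ring
lemma parts_ofMul_zero (k : ℕ) : (PartitionSeq.ofMul 0).parts k = 0 := by
  unfold PartitionSeq.ofMul
  simp

lemma parts_ofMul_replicate (m k : ℕ) :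
    (PartitionSeq.ofMul (Multiset.replicate m 1)).parts k = if k < m then 1 else 0 := by
  unfold PartitionSeq.ofMul
  simp only
  have hsort : Multiset.sort (Multiset.replicate m 1) (· ≤ ·) = List.replicate m 1 := by
    have hlen : (Multiset.sort (Multiset.replicate m 1) (· ≤ ·)).length = m := by
      rw [Multiset.length_sort, Multiset.card_replicate]
    rw [List.eq_replicate_iff]
    refine ⟨hlen, ?_⟩
    intro b hb
    have hbm : b ∈ Multiset.replicate m 1 := by
      rw [← Multiset.mem_sort (r := (· ≤ ·))]
      exact hb
    exact Multiset.eq_of_mem_replicate hbm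
  rw [hsort, List.reverse_replicate]
  rcases lt_or_ge k m with h | h
  · rw [List.getD_eq_getElem _ _ (by simpa using h), List.getElem_replicate]
    simp [h]
  · rw [List.getD_eq_default _ _ (by simpa using h), if_neg (by omega)]

lemma size_ofMul_zero : (PartitionSeq.ofMul 0).size = 0 := by
  unfold PartitionSeq.size
  apply Finset.sum_eq_zero
  intro i _
  exact parts_ofMul_zero i

lemma size_ofMul_replicate (m : ℕ) : (PartitionSeq.ofMul (Multiset.replicate m 1)).size = m := by
  have h0 : (PartitionSeq.ofMul (Multiset.replicate m 1)).parts m = 0 := by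
    rw [parts_ofMul_replicate]
    simp
  rw [← size_eq_sum _ m (Nat.find_min' _ h0)]
  have : ∀ i ∈ Finset.range m, (PartitionSeq.ofMul (Multiset.replicate m 1)).parts i = 1 := by
    intro i hi
    rw [parts_ofMul_replicate]
    simp [Finset.mem_range.mp hi]
  rw [Finset.sum_congr rfl this]
  simp

lemma betaCountGE_empty (s α : ℤ) :
    betaCountGE (PartitionSeq.ofMul 0) s α = (s + 1 - α).toNat := by
  apply betaCountGE_eq_of
  intro i
  unfold betaSet
  rw [parts_ofMul_zero]
  omega

lemma betaCountGE_rep (m : ℕ) (s α : ℤ) :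
    betaCountGE (PartitionSeq.ofMul (Multiset.replicate m 1)) s α
      = if α ≤ s + 1 - m then (s + 1 - α).toNat else (s + 2 - α).toNat := by
  apply betaCountGE_eq_of
  intro i
  unfold betaSet
  rw [parts_ofMul_replicate]
  by_cases him : i < m <;> split_ifs <;> simp [him] <;> omega
lemma chain_le (G : ℤ → ℤ) (a w : ℤ) (haw : a ≤ w)
    (h : ∀ y, a ≤ y → y < w → G y ≤ G (y + 1)) : G a ≤ G w := by
  obtain ⟨k, hk⟩ : ∃ k : ℕ, w = a + k := ⟨(w - a).toNat, by omega⟩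
  subst hk
  clear haw
  induction k with
  | zero => simp
  | succ k ih =>
    have h1 : G a ≤ G (a + k) := ih (fun y hy hy' => h y hy (by push_cast; omega))
    have h2 : G (a + k) ≤ G (a + k + 1) := h (a + k) (by omega) (by push_cast; omega)
    push_cast
    push_cast at h1 h2
    have : a + (k + 1 : ℤ) = a + k + 1 := by ring
    rw [this]
    omega

lemma sigmaT_sum (t : ℕ) : (sigmaT t).1 + (sigmaT t).2 = -1 := by
  unfold sigmaT
  split_ifs <;> simp

lemma sigmaT_mul (t : ℕ) : (sigmaT t).1 * (sigmaT t).2 = -((t : ℤ) ^ 2 + t) := by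
  unfold sigmaT
  split_ifs <;> simp <;> ring

lemma sigmaT_zero : sigmaT 0 = (0, -1) := by
  unfold sigmaT
  norm_num

/-- The counting function of the symbol of `1^{2n}.∅` with charge `σ₀`. -/
def NLf (n : ℕ) : ℤ → ℕ := fun α =>
  (if α ≤ 1 - 2 * (n : ℤ) then (1 - α).toNat else (2 - α).toNat) + (-α).toNat

/-- The counting function of the symbol of `∅.1^{2n}` with charge `σ₀`. -/
def NCf (n : ℕ) : ℤ → ℕ := fun α =>
  (1 - α).toNat + (if α ≤ -(2 * (n : ℤ)) then (-α).toNat else (1 - α).toNat)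

lemma symCount_L (n : ℕ) :
    symCountGE (bip (Multiset.replicate (2 * n) 1) 0) (sigmaT 0) = NLf n := by
  funext α
  unfold symCountGE bip NLf
  rw [sigmaT_zero]
  simp only
  rw [betaCountGE_rep, betaCountGE_empty]
  by_cases hcond : α ≤ 1 - 2 * (n : ℤ)
  · rw [if_pos (by push_cast; omega), if_pos hcond]
    omega
  · rw [if_neg (by push_cast; omega), if_neg hcond]
    omega

lemma symCount_C (n : ℕ) :
    symCountGE (bip 0 (Multiset.replicate (2 * n) 1)) (sigmaT 0) = NCf n := by
  funext α
  unfold symCountGE bip NCf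
  rw [sigmaT_zero]
  simp only
  rw [betaCountGE_rep, betaCountGE_empty]
  by_cases hcond : α ≤ -(2 * (n : ℤ))
  · rw [if_pos (by push_cast; omega), if_pos hcond]
    omega
  · rw [if_neg (by push_cast; omega), if_neg hcond]
    omega

/-- If the symbol of charge `σ_t` of a bipartition `μ` of
`2n - t² - t` is strictly dominated by the symbol of `1^{2n}.∅` of charge `σ₀`, then
its composition equals that of the symbol of `∅.1^{2n}` of charge `σ₀`. -/
theorem decomposition_numbers_stmt18 (n : ℕ) (hn : 1 ≤ n) (t : ℕ)
    (ht : t ^ 2 + t ≤ 2 * n) (l : Bipartition)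
    (hl : Bipartition.size l = 2 * n - (t ^ 2 + t))
    (hdom : DomLT l (sigmaT t) (bip (Multiset.replicate (2 * n) 1) 0) (sigmaT 0)) :
    comp l (sigmaT t) = comp (bip 0 (Multiset.replicate (2 * n) 1)) (sigmaT 0) := by
  obtain ⟨hne, hdle⟩ := hdom
  set σt := sigmaT t with hσtdef
  have hσ1 : σt.1 + σt.2 = -1 := sigmaT_sum t
  have hσ2 : σt.1 * σt.2 = -((t : ℤ) ^ 2 + t) := sigmaT_mul t
  have hn2 : (1 : ℤ) ≤ (n : ℤ) := by exact_mod_cast hn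
  set N₁ := Nat.find l.1.exists_zero with hN₁def
  set N₂ := Nat.find l.2.exists_zero with hN₂def
  have hN₁ : l.1.parts N₁ = 0 := Nat.find_spec l.1.exists_zero
  have hN₂ : l.2.parts N₂ = 0 := Nat.find_spec l.2.exists_zero
  set A : ℤ := min (min (σt.1 - N₁) (σt.2 - N₂)) (-(2 * (n : ℤ)) - 1) with hAdef
  have hA1 : A ≤ σt.1 + 1 - N₁ := by
    have h1 := min_le_left (min (σt.1 - (N₁:ℤ)) (σt.2 - N₂)) (-(2 * (n : ℤ)) - 1)
    have h2 := min_le_left (σt.1 - (N₁:ℤ)) (σt.2 - N₂)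
    omega
  have hA2 : A ≤ σt.2 + 1 - N₂ := by
    have h1 := min_le_left (min (σt.1 - (N₁:ℤ)) (σt.2 - N₂)) (-(2 * (n : ℤ)) - 1)
    have h2 := min_le_right (σt.1 - (N₁:ℤ)) (σt.2 - N₂)
    omega
  have hAn : A ≤ -(2 * (n : ℤ)) - 1 :=
    min_le_right (min (σt.1 - (N₁:ℤ)) (σt.2 - N₂)) (-(2 * (n : ℤ)) - 1)
  set B : ℤ := max (max (vbound l σt)
    (vbound (bip (Multiset.replicate (2 * n) 1) 0) (sigmaT 0))) 2 with hBdef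
  have hBl : vbound l σt ≤ B := le_trans (le_max_left _ _) (le_max_left _ _)
  have hBΛ : vbound (bip (Multiset.replicate (2 * n) 1) 0) (sigmaT 0) ≤ B :=
    le_trans (le_max_right _ _) (le_max_left _ _)
  have hB2 : (2 : ℤ) ≤ B := le_max_right _ _
  set N : ℤ → ℕ := symCountGE l σt with hNdef
  have hNL : symCountGE (bip (Multiset.replicate (2 * n) 1) 0) (sigmaT 0) = NLf n :=
    symCount_L n
  have hNC : symCountGE (bip 0 (Multiset.replicate (2 * n) 1)) (sigmaT 0) = NCf n :=
    symCount_C n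
  have hstepN : ∀ z : ℤ, N z ≤ N (z + 1) + 2 := by
    intro z
    have h := symCountGE_step l σt (z + 1)
    have harg : z + 1 - 1 = z := by ring
    rw [harg] at h
    exact h
  have htail : ∀ β : ℤ, β ≤ A → (N β : ℤ) = 1 - 2 * β := by
    intro β hβ
    have h1 := betaCountGE_tail l.1 σt.1 β N₁ hN₁ (by omega)
    have h2 := betaCountGE_tail l.2 σt.2 β N₂ hN₂ (by omega)
    have hNb : N β = betaCountGE l.1 σt.1 β + betaCountGE l.2 σt.2 β := rfl
    rw [hNb, h1, h2]
    have hb1 : (0:ℤ) ≤ σt.1 + 1 - β := by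
      have : (0:ℤ) ≤ (N₁ : ℤ) := Int.natCast_nonneg _
      omega
    have hb2 : (0:ℤ) ≤ σt.2 + 1 - β := by
      have : (0:ℤ) ≤ (N₂ : ℤ) := Int.natCast_nonneg _
      omega
    push_cast
    omega
  have hD1 : ∀ α : ℤ, TN N α B ≤ TN (NLf n) α B := by
    intro α
    rw [← hNL]
    exact T_le_T l σt _ (sigmaT 0) α B hBl hBΛ hdle
  -- equality of T at A
  have hTA : TN N A B = TN (NLf n) A B := by
    have hb1 : (l.1.parts 0 : ℤ) + σt.1 ≤ B := by
      have : (l.1.parts 0 : ℤ) + σt.1 ≤ vbound l σt := le_max_left _ _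
      omega
    have hb2 : (l.2.parts 0 : ℤ) + σt.2 ≤ B := by
      have : (l.2.parts 0 : ℤ) + σt.2 ≤ vbound l σt := le_max_right _ _
      omega
    have hSl := T_size l σt A B hb1 hb2 N₁ N₂ hN₁ hN₂ (by omega) (by omega)
    have hΛ1 : (bip (Multiset.replicate (2 * n) 1) 0).1.parts (2 * n) = 0 := by
      show (PartitionSeq.ofMul (Multiset.replicate (2 * n) 1)).parts (2 * n) = 0
      rw [parts_ofMul_replicate]
      simp
    have hΛ2 : (bip (Multiset.replicate (2 * n) 1) 0).2.parts 0 = 0 := parts_ofMul_zero 0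
    have hbΛ1 : ((bip (Multiset.replicate (2 * n) 1) 0).1.parts 0 : ℤ) + (sigmaT 0).1 ≤ B := by
      have : ((bip (Multiset.replicate (2 * n) 1) 0).1.parts 0 : ℤ) + (sigmaT 0).1
          ≤ vbound (bip (Multiset.replicate (2 * n) 1) 0) (sigmaT 0) := le_max_left _ _
      omega
    have hbΛ2 : ((bip (Multiset.replicate (2 * n) 1) 0).2.parts 0 : ℤ) + (sigmaT 0).2 ≤ B := by
      have : ((bip (Multiset.replicate (2 * n) 1) 0).2.parts 0 : ℤ) + (sigmaT 0).2
          ≤ vbound (bip (Multiset.replicate (2 * n) 1) 0) (sigmaT 0) := le_max_right _ _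
      omega
    have hs0 : (sigmaT 0).1 = 0 := by rw [sigmaT_zero]
    have hs0' : (sigmaT 0).2 = -1 := by rw [sigmaT_zero]
    have hΛsz := T_size (bip (Multiset.replicate (2 * n) 1) 0) (sigmaT 0) A B hbΛ1 hbΛ2
      (2 * n) 0 hΛ1 hΛ2 (by rw [hs0]; push_cast; omega) (by rw [hs0']; push_cast; omega)
    rw [hNL] at hΛsz
    rw [hs0, hs0'] at hΛsz
    have hsizel : (Bipartition.size l : ℤ) = 2 * (n : ℤ) - ((t : ℤ) ^ 2 + t) := by
      rw [hl, Nat.cast_sub ht]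
      push_cast
      ring
    have hsizeΛ : (Bipartition.size (bip (Multiset.replicate (2 * n) 1) 0) : ℤ)
        = 2 * (n : ℤ) := by
      show ((PartitionSeq.ofMul (Multiset.replicate (2 * n) 1)).size
        + (PartitionSeq.ofMul 0).size : ℤ) = 2 * (n : ℤ)
      rw [size_ofMul_replicate, size_ofMul_zero]
      push_cast
      ring
    rw [hsizel] at hSl
    rw [hsizeΛ] at hΛsz
    have hexp : ∀ x y a : ℤ, (x + 1 - a) * (x + 2 - a) + (y + 1 - a) * (y + 2 - a)
        = (x + y) * (x + y) - 2 * (x * y) + (3 - 2 * a) * (x + y)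
          + 2 * (a * a - 3 * a + 2) := by
      intros x y a
      ring
    have e1 := hexp σt.1 σt.2 A
    have e2 := hexp 0 (-1) A
    rw [hσ1, hσ2] at e1
    linarith [hSl, hΛsz, e1, e2]
  -- N vanishes above 2
  have hNLzero : ∀ β : ℤ, 2 ≤ β → NLf n β = 0 := by
    intro β hβ
    unfold NLf
    split_ifs <;> omega
  have hT2 : TN (NLf n) 2 B = 0 := by
    unfold TN
    apply Finset.sum_eq_zero
    intro β hβ
    have := hNLzero β (Finset.mem_Icc.mp hβ).1
    simp [this]
  have hzero : ∀ β : ℤ, 2 ≤ β → N β = 0 := by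
    intro β hβ
    rcases le_or_gt β B with hb | hb
    · have h := hD1 2
      rw [hT2] at h
      unfold TN at h
      have hnn : ∀ x ∈ Finset.Icc (2 : ℤ) B, (0 : ℤ) ≤ (N x : ℤ) :=
        fun x _ => Int.natCast_nonneg _
      have hz := (Finset.sum_eq_zero_iff_of_nonneg hnn).mp
        (le_antisymm h (Finset.sum_nonneg hnn))
      have := hz β (Finset.mem_Icc.mpr ⟨hβ, hb⟩)
      omega
    · exact symCountGE_vanish l σt β (by omega)
  -- N 1 ≤ 1
  have hNL1 : NLf n 1 = 1 := by
    unfold NLf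
    split_ifs <;> omega
  have hNLone : TN (NLf n) 1 B = 1 := by
    unfold TN
    rw [← Finset.add_sum_erase _ _ (Finset.mem_Icc.mpr ⟨le_refl (1 : ℤ), by omega⟩)]
    have h0 : ∀ x ∈ (Finset.Icc (1 : ℤ) B).erase 1, ((NLf n x : ℕ) : ℤ) = 0 := by
      intro x hx
      obtain ⟨hxne, hxI⟩ := Finset.mem_erase.mp hx
      have hx2 : 2 ≤ x := by
        have := (Finset.mem_Icc.mp hxI).1
        omega
      simp [hNLzero x hx2]
    rw [Finset.sum_eq_zero h0, hNL1]
    norm_num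
  have hN1le : N 1 ≤ 1 := by
    have h := hD1 1
    rw [hNLone] at h
    unfold TN at h
    have hmem : (1 : ℤ) ∈ Finset.Icc (1 : ℤ) B := Finset.mem_Icc.mpr ⟨le_refl _, by omega⟩
    have hsingle : ((N 1 : ℕ) : ℤ) ≤ ∑ β ∈ Finset.Icc (1 : ℤ) B, (N β : ℤ) :=
      Finset.single_le_sum (f := fun β : ℤ => (N β : ℤ))
        (fun x _ => Int.natCast_nonneg _) hmem
    omega
  by_cases hcase : N 1 = 0
  · -- Case I : the composition is that of ∅.1^{2n}
    have hNCzero : ∀ β : ℤ, 1 ≤ β → NCf n β = 0 := by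
      intro β hβ
      unfold NCf
      split_ifs <;> omega
    have hNCtail : ∀ β : ℤ, β ≤ -(2 * (n : ℤ)) → (NCf n β : ℤ) = 1 - 2 * β := by
      intro β hβ
      unfold NCf
      split_ifs <;> omega
    set G : ℤ → ℤ := fun β => (N β : ℤ) - NCf n β with hGdef
    have hG1 : ∀ β : ℤ, 1 ≤ β → G β = 0 := by
      intro β hβ
      have hC := hNCzero β hβ
      by_cases h2 : 2 ≤ β
      · have := hzero β h2
        simp only [hGdef]
        omega
      · have hβ1 : β = 1 := by omega
        subst hβ1
        simp only [hGdef]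
        omega
    have hGA : ∀ β : ℤ, β ≤ A → G β = 0 := by
      intro β hβ
      have h1 := htail β hβ
      have h2 := hNCtail β (by omega)
      simp only [hGdef]
      omega
    have hGstep : ∀ z : ℤ, z ≤ 0 →
        G z ≤ G (z + 1) + (if z = -(2 * (n : ℤ)) then 1 else 0) := by
      intro z hz
      have h1 := hstepN z
      have h2 : (NCf n z : ℤ) - NCf n (z + 1)
          = 2 - (if z = -(2 * (n : ℤ)) then 1 else 0) := by
        unfold NCf
        split_ifs <;> omega
      simp only [hGdef]
      split_ifs at h2 ⊢ <;> omega
    have hG1v : G 1 = 0 := hG1 1 le_rfl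
    have hGAv : G A = 0 := hGA A le_rfl
    have htop : ∀ z : ℤ, 1 - 2 * (n : ℤ) ≤ z → z ≤ 1 → G z ≤ 0 := by
      intro z hz1 hz2
      have hch := chain_le G z 1 hz2 (fun y hy hy' => by
        have hst := hGstep y (by omega)
        rw [if_neg (by omega)] at hst
        omega)
      omega
    have hbotlow : ∀ z : ℤ, A ≤ z → z ≤ -(2 * (n : ℤ)) → 0 ≤ G z := by
      intro z hz1 hz2
      have hch := chain_le G A z hz1 (fun y hy hy' => by
        have hst := hGstep y (by omega)
        rw [if_neg (by omega)] at hst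
        omega)
      omega
    have hbothigh : ∀ z : ℤ, A ≤ z → z ≤ -(2 * (n : ℤ)) → G z ≤ G (-(2 * (n : ℤ))) := by
      intro z hz1 hz2
      exact chain_le G z _ hz2 (fun y hy hy' => by
        have hst := hGstep y (by omega)
        rw [if_neg (by omega)] at hst
        omega)
    have hcross : G (-(2 * (n : ℤ))) ≤ G (1 - 2 * (n : ℤ)) + 1 := by
      have hst := hGstep (-(2 * (n : ℤ))) (by omega)
      rw [if_pos rfl] at hst
      have harg : -(2 * (n : ℤ)) + 1 = 1 - 2 * (n : ℤ) := by ring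
      rw [harg] at hst
      omega
    have hdiffLC : ∀ β : ℤ, (NLf n β : ℤ) - NCf n β
        = (if β = 1 then (1 : ℤ) else 0) - (if β = 1 - 2 * (n : ℤ) then (1 : ℤ) else 0) := by
      intro β
      unfold NLf NCf
      split_ifs <;> omega
    have hs1 : (∑ β ∈ Finset.Icc A B, G β) = TN N A B - TN (NCf n) A B := by
      simp only [hGdef]
      unfold TN
      exact Finset.sum_sub_distrib _ _
    have hs2 : TN (NLf n) A B - TN (NCf n) A B = 0 := by
      unfold TN
      rw [← Finset.sum_sub_distrib]
      rw [Finset.sum_congr rfl (fun β _ => hdiffLC β)]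
      rw [Finset.sum_sub_distrib]
      rw [Finset.sum_ite_eq' (Finset.Icc A B) (1 : ℤ) (fun _ => (1 : ℤ))]
      rw [Finset.sum_ite_eq' (Finset.Icc A B) (1 - 2 * (n : ℤ)) (fun _ => (1 : ℤ))]
      rw [if_pos (Finset.mem_Icc.mpr ⟨by omega, by omega⟩),
        if_pos (Finset.mem_Icc.mpr ⟨by omega, by omega⟩)]
      ring
    have hsum : (∑ β ∈ Finset.Icc A B, G β) = 0 := by
      rw [hs1, hTA]
      exact hs2
    by_cases hkey : G (1 - 2 * (n : ℤ)) ≤ -1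
    · exfalso
      have hmem : (1 - 2 * (n : ℤ)) ∈ Finset.Icc A B := Finset.mem_Icc.mpr ⟨by omega, by omega⟩
      rw [← Finset.add_sum_erase _ _ hmem] at hsum
      have herase : ∀ x ∈ (Finset.Icc A B).erase (1 - 2 * (n : ℤ)), G x ≤ 0 := by
        intro x hx
        obtain ⟨hxne, hxI⟩ := Finset.mem_erase.mp hx
        obtain ⟨hxA, hxB⟩ := Finset.mem_Icc.mp hxI
        by_cases h1 : 1 ≤ x
        · have := hG1 x h1
          omega
        · by_cases h2 : 1 - 2 * (n : ℤ) ≤ x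
          · exact htop x h2 (by omega)
          · have hb2 := hbothigh x hxA (by omega)
            omega
      have hsum2 : (∑ x ∈ (Finset.Icc A B).erase (1 - 2 * (n : ℤ)), G x) ≤ 0 :=
        Finset.sum_nonpos herase
      omega
    · push_neg at hkey
      have htopge : ∀ z : ℤ, 1 - 2 * (n : ℤ) ≤ z → z ≤ 1 → 0 ≤ G z := by
        intro z hz1 hz2
        have hch := chain_le G (1 - 2 * (n : ℤ)) z hz1 (fun y hy hy' => by
          have hst := hGstep y (by omega)
          rw [if_neg (by omega)] at hst
          omega)
        omega
      have hnonneg : ∀ x ∈ Finset.Icc A B, 0 ≤ G x := by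
        intro x hx
        obtain ⟨hxA, hxB⟩ := Finset.mem_Icc.mp hx
        by_cases h1 : 1 ≤ x
        · have := hG1 x h1
          omega
        · by_cases h2 : 1 - 2 * (n : ℤ) ≤ x
          · exact htopge x h2 (by omega)
          · exact hbotlow x hxA (by omega)
      have hall := (Finset.sum_eq_zero_iff_of_nonneg hnonneg).mp hsum
      have hNeq : ∀ α : ℤ, symCountGE l σt α
          = symCountGE (bip 0 (Multiset.replicate (2 * n) 1)) (sigmaT 0) α := by
        intro α
        rw [hNC]
        have hGα : G α = 0 := by
          rcases le_or_gt α A with h | h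
          · exact hGA α h
          · rcases le_or_gt α B with h2 | h2
            · exact hall α (Finset.mem_Icc.mpr ⟨by omega, h2⟩)
            · exact hG1 α (by omega)
        simp only [hGdef] at hGα
        rw [← hNdef]
        omega
      exact comp_congr l σt _ (sigmaT 0) hNeq
  · -- Case II : the composition would be that of 1^{2n}.∅, contradiction
    exfalso
    have hcase1 : N 1 = 1 := by omega
    apply hne
    have hNLtail : ∀ β : ℤ, β ≤ 1 - 2 * (n : ℤ) → (NLf n β : ℤ) = 1 - 2 * β := by
      intro β hβ
      unfold NLf
      split_ifs <;> omega
    set G : ℤ → ℤ := fun β => (N β : ℤ) - NLf n β with hGdef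
    have hG1 : ∀ β : ℤ, 1 ≤ β → G β = 0 := by
      intro β hβ
      by_cases h2 : 2 ≤ β
      · have := hzero β h2
        have := hNLzero β h2
        simp only [hGdef]
        omega
      · have hβ1 : β = 1 := by omega
        subst hβ1
        simp only [hGdef]
        omega
    have hGA : ∀ β : ℤ, β ≤ A → G β = 0 := by
      intro β hβ
      have h1 := htail β hβ
      have h2 := hNLtail β (by omega)
      simp only [hGdef]
      omega
    have hGstep : ∀ z : ℤ, z ≤ 0 →
        G z ≤ G (z + 1) + (if z = 0 then 1 else 0)
          + (if z = 1 - 2 * (n : ℤ) then 1 else 0) := by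
      intro z hz
      have h1 := hstepN z
      have h2 : (NLf n z : ℤ) - NLf n (z + 1)
          = 2 - (if z = 0 then 1 else 0) - (if z = 1 - 2 * (n : ℤ) then 1 else 0) := by
        unfold NLf
        split_ifs <;> omega
      simp only [hGdef]
      split_ifs at h2 ⊢ <;> omega
    have hGAv : G A = 0 := hGA A le_rfl
    have hG0 : G 0 ≤ 0 := by
      have h := hD1 0
      have hs : (∑ β ∈ Finset.Icc (0 : ℤ) B, G β) = TN N 0 B - TN (NLf n) 0 B := by
        simp only [hGdef]
        unfold TN
        exact Finset.sum_sub_distrib _ _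
      have hmem0 : (0 : ℤ) ∈ Finset.Icc (0 : ℤ) B := Finset.mem_Icc.mpr ⟨le_rfl, by omega⟩
      rw [← Finset.add_sum_erase _ _ hmem0] at hs
      have herr : ∀ x ∈ (Finset.Icc (0 : ℤ) B).erase 0, G x = 0 := by
        intro x hx
        obtain ⟨hxne, hxI⟩ := Finset.mem_erase.mp hx
        have := (Finset.mem_Icc.mp hxI).1
        exact hG1 x (by omega)
      rw [Finset.sum_eq_zero herr] at hs
      omega
    have htop : ∀ z : ℤ, 2 - 2 * (n : ℤ) ≤ z → z ≤ 0 → G z ≤ 0 := by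
      intro z hz1 hz2
      have hch := chain_le G z 0 hz2 (fun y hy hy' => by
        have hst := hGstep y (by omega)
        rw [if_neg (by omega), if_neg (by omega)] at hst
        omega)
      omega
    have hbotlow : ∀ z : ℤ, A ≤ z → z ≤ 1 - 2 * (n : ℤ) → 0 ≤ G z := by
      intro z hz1 hz2
      have hch := chain_le G A z hz1 (fun y hy hy' => by
        have hst := hGstep y (by omega)
        rw [if_neg (by omega), if_neg (by omega)] at hst
        omega)
      omega
    have hbothigh : ∀ z : ℤ, A ≤ z → z ≤ 1 - 2 * (n : ℤ) → G z ≤ G (1 - 2 * (n : ℤ)) := by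
      intro z hz1 hz2
      exact chain_le G z _ hz2 (fun y hy hy' => by
        have hst := hGstep y (by omega)
        rw [if_neg (by omega), if_neg (by omega)] at hst
        omega)
    have hcross : G (1 - 2 * (n : ℤ)) ≤ G (2 - 2 * (n : ℤ)) + 1 := by
      have hst := hGstep (1 - 2 * (n : ℤ)) (by omega)
      rw [if_neg (by omega), if_pos rfl] at hst
      have harg : 1 - 2 * (n : ℤ) + 1 = 2 - 2 * (n : ℤ) := by ring
      rw [harg] at hst
      omega
    have hs1 : (∑ β ∈ Finset.Icc A B, G β) = TN N A B - TN (NLf n) A B := by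
      simp only [hGdef]
      unfold TN
      exact Finset.sum_sub_distrib _ _
    have hsum : (∑ β ∈ Finset.Icc A B, G β) = 0 := by
      rw [hs1, hTA]
      ring
    by_cases hkey : G (2 - 2 * (n : ℤ)) ≤ -1
    · exfalso
      have hmem : (2 - 2 * (n : ℤ)) ∈ Finset.Icc A B := Finset.mem_Icc.mpr ⟨by omega, by omega⟩
      rw [← Finset.add_sum_erase _ _ hmem] at hsum
      have herase : ∀ x ∈ (Finset.Icc A B).erase (2 - 2 * (n : ℤ)), G x ≤ 0 := by
        intro x hx
        obtain ⟨hxne, hxI⟩ := Finset.mem_erase.mp hx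
        obtain ⟨hxA, hxB⟩ := Finset.mem_Icc.mp hxI
        by_cases h1 : 1 ≤ x
        · have := hG1 x h1
          omega
        · by_cases h2 : 2 - 2 * (n : ℤ) ≤ x
          · exact htop x h2 (by omega)
          · have hb2 := hbothigh x hxA (by omega)
            omega
      have hsum2 : (∑ x ∈ (Finset.Icc A B).erase (2 - 2 * (n : ℤ)), G x) ≤ 0 :=
        Finset.sum_nonpos herase
      omega
    · push_neg at hkey
      have htopge : ∀ z : ℤ, 2 - 2 * (n : ℤ) ≤ z → z ≤ 0 → 0 ≤ G z := by
        intro z hz1 hz2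
        have hch := chain_le G (2 - 2 * (n : ℤ)) z hz1 (fun y hy hy' => by
          have hst := hGstep y (by omega)
          rw [if_neg (by omega), if_neg (by omega)] at hst
          omega)
        omega
      have hnonneg : ∀ x ∈ Finset.Icc A B, 0 ≤ G x := by
        intro x hx
        obtain ⟨hxA, hxB⟩ := Finset.mem_Icc.mp hx
        by_cases h1 : 1 ≤ x
        · have := hG1 x h1
          omega
        · by_cases h2 : 2 - 2 * (n : ℤ) ≤ x
          · exact htopge x h2 (by omega)
          · exact hbotlow x hxA (by omega)
      have hall := (Finset.sum_eq_zero_iff_of_nonneg hnonneg).mp hsum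
      have hNeq : ∀ α : ℤ, symCountGE l σt α
          = symCountGE (bip (Multiset.replicate (2 * n) 1) 0) (sigmaT 0) α := by
        intro α
        rw [hNL]
        have hGα : G α = 0 := by
          rcases le_or_gt α A with h | h
          · exact hGA α h
          · rcases le_or_gt α B with h2 | h2
            · exact hall α (Finset.mem_Icc.mpr ⟨by omega, h2⟩)
            · exact hG1 α (by omega)
        simp only [hGdef] at hGα
        rw [← hNdef]
        omega
      exact comp_congr l σt _ (sigmaT 0) hNeq
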